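/- Let A be an abelian group, o ∈ A, S ⊆ A with o ∈ S, and define Sᵢ as above. If every element of A can be written as a finite sum of elements of S plus an integer multiple of o (i.e., S ∪ {o} generates A as a group together with the closure of S under the relation m[s] = [s'] + (m-1)[o]), and Sᵢ satisfies m·Sᵢ ⊆ Sᵢ for all m ∈ ℤ, then ⋃_{i≥0} Sᵢ = A. -/

import Mathlib

/-- The i-th piece of the filtration: sums of i elements of S plus an integer
multiple of o (S₀ = ℤ·o). -/
def filtS {A : Type*} [AddCommGroup A] (S : Set A) (o : A) (i : ℕ) : Set A :=
  {a | ∃ s : Fin i → A, (∀ k, s k ∈ S) ∧ ∃ n : ℤ, a = (∑ k, s k) + n • o}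

/-- Proposition 1.6(c), abstracted: if S (containing o) generates A as a group
and each Sᵢ is stable under multiplication by integers, then ⋃ᵢ Sᵢ = A. -/
theorem stmt9 (A : Type*) [AddCommGroup A] (S : Set A) (o : A) (ho : o ∈ S)
    (hgen : AddSubgroup.closure S = ⊤)
    (hmul : ∀ (i : ℕ) (α : A), α ∈ filtS S o i → ∀ m : ℤ, m • α ∈ filtS S o i) :
    (⋃ i : ℕ, filtS S o i) = Set.univ := by
  ext a
  simp only [Set.mem_iUnion, Set.mem_univ, iff_true]
  have ha : a ∈ AddSubgroup.closure S := hgen ▸ AddSubgroup.mem_top a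
  induction ha using AddSubgroup.closure_induction with
  | mem x hx => exact ⟨1, fun _ => x, fun _ => hx, 0, by simp⟩
  | zero => exact ⟨0, fun _ => o, fun k => k.elim0, 0, by simp⟩
  | add x y _ _ hx hy =>
      obtain ⟨i, s, hs, n, rfl⟩ := hx
      obtain ⟨j, t, ht, m, rfl⟩ := hy
      refine ⟨i + j, Fin.append s t, ?_, n + m, ?_⟩
      · intro k
        refine Fin.addCases (fun p => ?_) (fun p => ?_) k
        · simpa using hs p
        · simpa using ht p
      · rw [Fin.sum_univ_add]
        simp only [Fin.append_left, Fin.append_right]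
        module
  | neg x _ hx =>
      obtain ⟨i, hi⟩ := hx
      exact ⟨i, by simpa using hmul i x hi (-1)⟩
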